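/- arXiv:1502.06262 — 5 statements merged into one kernel-verified Lean document; each statement's English description precedes it below -/
import Mathlib

section
/- The shift map σ on the Ott-Tomforde-Willis full shift Σ_A over an infinite countable alphabet A is not continuous at the empty sequence Ø. -/
namespace OTW

/-- The Ott-Tomforde-Willis full shift `Σ_A`: sequences over `A ∪ {õ}` (with `õ = none`)
such that once the empty letter `õ` appears, it repeats forever. -/
@[ext]
structure FullShift (A : Type*) where
  val : ℕ → Option A
  tail : ∀ i, val i = none → val (i + 1) = none

variable {A B : Type*}

/-- The shift map `σ`. -/
def shiftMap (x : FullShift A) : FullShift A :=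
  ⟨fun i => x.val (i + 1), fun i hi => x.tail (i + 1) hi⟩

/-- The empty sequence `Ø`. -/
def emptySeq : FullShift A :=
  ⟨fun _ => none, fun _ _ => rfl⟩

theorem val_none_mono (x : FullShift A) :
    ∀ {k m : ℕ}, k ≤ m → x.val k = none → x.val m = none := by
  intro k m h hk
  induction m, h using Nat.le_induction with
  | base => exact hk
  | succ m hm ih => exact x.tail m ih

/-- The finite sequence determined by a word `w : List A`. -/
def finSeq (w : List A) : FullShift A where
  val i := (w.drop i).head?
  tail := by
    intro i hi
    rw [List.head?_eq_none_iff] at hi ⊢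
    rw [List.drop_eq_nil_iff] at hi ⊢
    omega

/-- Generalized cylinder `Z(w, F)`. -/
def Zcyl (w : List A) (F : Finset A) : Set (FullShift A) :=
  {x | (∀ i : Fin w.length, x.val i = some (w.get i)) ∧ ∀ a ∈ F, x.val w.length ≠ some a}

/-- The topology on `Σ_A` generated by the generalized cylinders. -/
instance : TopologicalSpace (FullShift A) :=
  TopologicalSpace.generateFrom {S | ∃ (w : List A) (F : Finset A), S = Zcyl w F}

/-- The letters `L_Λ` used by sequences of `Λ`. -/
def letters (Λ : Set (FullShift A)) : Set A :=
  {a | ∃ x ∈ Λ, ∃ i, x.val i = some a}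

/-- `w` is a (fully lettered) block appearing in some sequence of `Λ`. -/
def IsBlock (Λ : Set (FullShift A)) (w : List A) : Prop :=
  ∃ x ∈ Λ, ∃ n, ∀ i : Fin w.length, x.val (n + i) = some (w.get i)

/-- Ott-Tomforde-Willis shift space: closed, shift invariant, with the
infinite extension property. -/
def IsShiftSpace (Λ : Set (FullShift A)) : Prop :=
  IsClosed Λ ∧ (∀ x ∈ Λ, shiftMap x ∈ Λ) ∧
    (emptySeq ∈ Λ ↔ (letters Λ).Infinite) ∧
    (∀ w : List A, w ≠ [] → (finSeq w ∈ Λ ↔ {b : A | IsBlock Λ (w ++ [b])}.Infinite))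

/-- `x` begins with the block `b` (a word over the extended alphabet `A ∪ {õ}`). -/
def Prefixed (x : FullShift A) (b : List (Option A)) : Prop :=
  ∀ i : Fin b.length, x.val i = b.get i

/-- `(P, Q)` is a representation of `C` as a finitely defined set in `Λ`:
membership in `C` is witnessed by an initial block in `P`, and membership in the
complement by an initial block in `Q`. -/
def FDRep (Λ C : Set (FullShift A)) (P Q : Set (List (Option A))) : Prop :=
  (∀ b ∈ P, b ≠ []) ∧ (∀ b ∈ Q, b ≠ []) ∧
    C = {x ∈ Λ | ∃ b ∈ P, Prefixed x b} ∧
    Λ \ C = {x ∈ Λ | ∃ b ∈ Q, Prefixed x b}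

/-- `C` is a finitely defined set in `Λ`. -/
def FinitelyDefinedIn (Λ C : Set (FullShift A)) : Prop :=
  ∃ P Q, FDRep Λ C P Q

/-- `S` is a finite (possibly empty) union of generalized cylinders of `Λ`. -/
def IsFinUnionCyl (Λ S : Set (FullShift A)) : Prop :=
  ∃ (n : ℕ) (w : Fin n → List A) (F : Fin n → Finset A),
    S = Λ ∩ ⋃ i, Zcyl (w i) (F i)

/-- `Φ` is the sliding block code determined by the partition `{C_a}` of `Λ` into
finitely defined sets, with `C_õ` shift invariant. -/
def IsSBCWith (Λ : Set (FullShift A)) (Φ : FullShift A → FullShift B)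
    (C : Option B → Set (FullShift A)) : Prop :=
  (∀ a, C a ⊆ Λ) ∧ (∀ x ∈ Λ, ∃! a, x ∈ C a) ∧
    (∀ a, FinitelyDefinedIn Λ (C a)) ∧
    (∀ x ∈ C none, shiftMap x ∈ C none) ∧
    (∀ x ∈ Λ, ∀ n : ℕ, shiftMap^[n] x ∈ C ((Φ x).val n))

/-- Sliding block code. -/
def IsSlidingBlockCode (Λ : Set (FullShift A)) (Φ : FullShift A → FullShift B) : Prop :=
  ∃ C, IsSBCWith Λ Φ C

/-- Row-finite shift: every letter has a finite follower set. -/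
def RowFinite (Λ : Set (FullShift A)) : Prop :=
  ∀ a ∈ letters Λ, {b : A | IsBlock Λ [a, b]}.Finite

/-- The `M`-th higher block code `Ξ^(M)`. -/
noncomputable def higherBlock (M : ℕ) (x : FullShift A) : FullShift (Fin M → A) where
  val i := if h : ∀ j : Fin M, (x.val (i + j)).isSome then
      some (fun j => (x.val (i + j)).get (h j)) else none
  tail := by
    intro i hi
    try dsimp only at hi ⊢
    have h1 : ¬ ∀ j : Fin M, (x.val (i + j)).isSome := by
      intro h
      rw [dif_pos h] at hi
      exact Option.some_ne_none _ hi
    push_neg at h1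
    obtain ⟨j, hj⟩ := h1
    have hjn : x.val (i + j) = none := Option.not_isSome_iff_eq_none.mp hj
    have hM : (0 : ℕ) < M := j.pos
    rw [dif_neg]
    intro h2
    have hsome := h2 ⟨M - 1, by omega⟩
    have hnone : x.val (i + 1 + ((⟨M - 1, by omega⟩ : Fin M) : ℕ)) = none := by
      apply val_none_mono x ?_ hjn
      have := j.isLt
      simp only [Fin.val_mk]
      omega
    rw [hnone] at hsome
    simp at hsome


lemma cofinite_of_generateOpen (a₀ : A) (t : Set (FullShift A))
    (ht : TopologicalSpace.GenerateOpen
      {S | ∃ (w : List A) (F : Finset A), S = Zcyl w F} t)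
    : emptySeq ∈ t → {b : A | finSeq [b, a₀] ∈ t}ᶜ.Finite := by
  induction ht with
  | basic S hS =>
    obtain ⟨w, F, rfl⟩ := hS
    intro h0
    have hw : w = [] := by
      cases w with
      | nil => rfl
      | cons c w' =>
        exfalso
        have := h0.1 ⟨0, by simp⟩
        simp [emptySeq] at this
    subst hw
    apply F.finite_toSet.subset
    intro b hb
    simp only [Set.mem_compl_iff, Set.mem_setOf_eq] at hb
    by_contra hbF
    apply hb
    constructor
    · intro i; exact absurd i.isLt (by simp)
    · intro a ha hcontra
      have : b = a := by
        simpa [finSeq] using hcontra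
      exact hbF (this ▸ ha)
  | univ => intro _; simp
  | inter s₁ s₂ _ _ ih₁ ih₂ =>
    intro h0
    have := (ih₁ h0.1).union (ih₂ h0.2)
    apply this.subset
    intro b hb
    simp only [Set.mem_compl_iff, Set.mem_inter_iff, Set.mem_union] at hb ⊢
    tauto
  | sUnion S _ ih =>
    intro h0
    obtain ⟨s, hs, hxs⟩ := h0
    apply (ih s hs hxs).subset
    intro b hb
    simp only [Set.mem_compl_iff, Set.mem_sUnion] at hb ⊢
    intro h; exact hb ⟨s, hs, h⟩

/-- the shift map on `Σ_A` (A countably infinite) is not continuous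
at the empty sequence `Ø`. -/
theorem shiftMap_not_continuousAt_emptySeq (A : Type*) [Countable A] [Infinite A] :
    ¬ ContinuousAt (shiftMap : FullShift A → FullShift A) emptySeq := by
  have ⟨a₀⟩ : Nonempty A := inferInstance
  intro hc
  have hV : IsOpen (Zcyl ([] : List A) {a₀}) :=
    TopologicalSpace.GenerateOpen.basic _ ⟨[], {a₀}, rfl⟩
  have hmem : shiftMap (emptySeq : FullShift A) ∈ Zcyl ([] : List A) {a₀} := by
    constructor
    · intro i; exact absurd i.isLt (by simp)
    · intro a ha h
      simp [shiftMap, emptySeq] at h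
  have hnhds := hc (hV.mem_nhds hmem)
  rw [Filter.mem_map, mem_nhds_iff] at hnhds
  obtain ⟨t, hts, hto, h0t⟩ := hnhds
  have hcof := cofinite_of_generateOpen a₀ t hto h0t
  obtain ⟨b, hb⟩ := hcof.infinite_compl.nonempty
  simp only [Set.mem_compl_iff, Set.mem_setOf_eq, not_not] at hb
  have := hts hb
  exact this.2 a₀ (Finset.mem_singleton_self a₀) (by simp [shiftMap, finSeq])


end OTW
end

section
/- Any subset of Σ_A consisting only of infinite sequences (and which is nonempty) is not a finitely defined set in Σ_A. -/
namespace OTW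

variable {A B : Type*}

/-- a nonempty set of infinite sequences is never finitely defined
in `Σ_A`. -/
theorem infinite_seqs_not_finitelyDefined {A : Type*} [Countable A] [Infinite A]
    (C : Set (FullShift A)) (hne : C.Nonempty)
    (hinf : ∀ x ∈ C, ∀ k, x.val k ≠ none) :
    ¬ FinitelyDefinedIn Set.univ C := by
  rintro ⟨P, Q, hP, hQ, hC, hCc⟩
  obtain ⟨x, hx⟩ := hne
  have hxP : ∃ b ∈ P, Prefixed x b := by
    have := hC ▸ hx
    exact this.2
  obtain ⟨b, hbP, hpre⟩ := hxP
  set y : FullShift A := ⟨fun i => if i < b.length then x.val i else none, by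
    intro i hi
    by_cases h : i < b.length
    · rw [if_pos h] at hi
      exact absurd hi (hinf x hx i)
    · rw [if_neg (by omega)]⟩ with hy
  have hyC : y ∈ C := by
    rw [hC]
    refine ⟨Set.mem_univ _, b, hbP, ?_⟩
    intro i
    have : (i : ℕ) < b.length := i.isLt
    simp only [hy, if_pos this]
    exact hpre i
  have := hinf y hyC b.length
  apply this
  simp [hy]


end OTW
end

section
/- If Φ : Λ → Γ is a sliding block code with Φ(Ø) = Ø, then for every finite sequence x ∈ Λ, the image Φ(x) is a finite sequence in Γ with length l(Φ(x)) ≤ l(x). -/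
namespace OTW

variable {A B : Type*}

/-- if a sliding block code fixes `Ø`, it maps finite sequences to
finite sequences of length at most the original length (i.e. `x_k = õ` implies
`(Φ x)_k = õ`). -/
theorem slidingBlockCode_finite_to_finite {A B : Type*} [Countable A] [Infinite A] [Countable B] [Infinite B]
    (Λ : Set (FullShift A)) (Γ : Set (FullShift B))
    (hΛ : IsShiftSpace Λ) (hΓ : IsShiftSpace Γ)
    (Φ : FullShift A → FullShift B) (hmap : Set.MapsTo Φ Λ Γ)
    (h : IsSlidingBlockCode Λ Φ) (hO : emptySeq ∈ Λ)
    (hOO : Φ emptySeq = emptySeq) :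
    ∀ x ∈ Λ, ∀ k, x.val k = none → (Φ x).val k = none := by
  obtain ⟨C, hsub, huniq, hfd, hshift, hcoord⟩ := h
  intro x hx k hk
  -- shiftMap^[k] x = emptySeq
  have hiter : ∀ n (y : FullShift A) i, (shiftMap^[n] y).val i = y.val (i + n) := by
    intro n
    induction n with
    | zero => intro y i; simp
    | succ n ih =>
      intro y i
      rw [Function.iterate_succ_apply, ih]
      simp [shiftMap]
      ring_nf
  have heq : shiftMap^[k] x = emptySeq := by
    apply FullShift.ext
    funext i
    rw [hiter]
    exact val_none_mono x (Nat.le_add_left k i) hk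
  have h1 : emptySeq ∈ C ((Φ x).val k) := heq ▸ hcoord x hx k
  have h2 : emptySeq ∈ C (none : Option B) := by
    have := hcoord emptySeq hO 0
    rw [hOO] at this
    exact this
  obtain ⟨a, _, hu⟩ := huniq emptySeq hO
  rw [hu _ h1, hu _ h2]

end OTW
end

section
/- Let d ∈ B and Φ : Λ → Γ with Φ(Ø) = (d,d,d,…) and, if Ø ∈ Γ, Φ^{-1}(Ø) finitely defined. Then Φ is continuous and shift-commuting if and only if Φ is a sliding block code whose classes C_a (a ∈ L_Γ) are finite unions of generalized cylinders of Λ, such that (1) C_a is empty for all but finitely many a ∈ L_Γ, and (2) for each M ≥ 1 there is a finite set F_M ⊂ L_Λ with σ^{n−1}(Z(Ø,F_M) ∩ Λ) ⊆ C_d for all 1 ≤ n ≤ M. -/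
namespace OTW

variable {A B : Type*}

-- ===== aux layer =====
section Aux
variable {A : Type*}

@[simp] lemma shiftMap_val (x : FullShift A) (i : ℕ) : (shiftMap x).val i = x.val (i+1) := rfl

lemma iter_shift_val (x : FullShift A) (n i : ℕ) : (shiftMap^[n] x).val i = x.val (n+i) := by
  induction n generalizing i with
  | zero => simp
  | succ n ih =>
    rw [Function.iterate_succ_apply', shiftMap_val, ih]
    ring_nf

lemma iter_shift_mem {Λ : Set (FullShift A)} (hσ : ∀ x ∈ Λ, shiftMap x ∈ Λ) {x : FullShift A}
    (hx : x ∈ Λ) (n : ℕ) : shiftMap^[n] x ∈ Λ := by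
  induction n with
  | zero => exact hx
  | succ n ih => rw [Function.iterate_succ_apply']; exact hσ _ ih

lemma iter_eq_empty {x : FullShift A} {n : ℕ} (h : x.val n = none) :
    shiftMap^[n] x = emptySeq := by
  have : ∀ i, (shiftMap^[n] x).val i = (emptySeq : FullShift A).val i := by
    intro i
    rw [iter_shift_val]
    exact val_none_mono x (Nat.le_add_right n i) h
  exact FullShift.ext (funext this)

lemma mem_Zcyl {w : List A} {F : Finset A} {x : FullShift A} :
    x ∈ Zcyl w F ↔ (∀ i : Fin w.length, x.val i = some (w.get i)) ∧
      ∀ a ∈ F, x.val w.length ≠ some a := Iff.rfl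

lemma isOpen_Zcyl (w : List A) (F : Finset A) : IsOpen (Zcyl w F) :=
  TopologicalSpace.isOpen_generateFrom_of_mem ⟨w, F, rfl⟩

/-- Master extraction lemma. -/
lemma key_nbhd (x : FullShift A) (N : ℕ) (F : Finset A) (h : ∀ k < N, x.val k ≠ none)
    (hN : ∀ a ∈ F, x.val N ≠ some a) :
    ∃ w : List A, w.length = N ∧ x ∈ Zcyl w F ∧
      ∀ y ∈ Zcyl w F, ∀ k < N, y.val k = x.val k := by
  have hs : ∀ k, k < N → (x.val k).isSome := by
    intro k hk
    rw [Option.isSome_iff_ne_none]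
    exact h k hk
  refine ⟨List.ofFn (fun i : Fin N => (x.val i).get (hs i i.isLt)), by simp, ?_, ?_⟩
  · constructor
    · intro i
      have hi : (i : ℕ) < N := by simpa using i.isLt
      simp [List.get_eq_getElem, List.getElem_ofFn]
    · intro a ha
      simpa using hN a ha
  · intro y hy k hk
    have hk' : k < (List.ofFn (fun i : Fin N => (x.val i).get (hs i i.isLt))).length := by
      simpa using hk
    have := hy.1 ⟨k, hk'⟩
    simp only [List.get_eq_getElem, List.getElem_ofFn] at this
    rw [this]
    simp

end Aux
section Cyl
variable {A : Type*}

lemma alive_of_mem_Zcyl {w : List A} {F : Finset A} {x : FullShift A} (hx : x ∈ Zcyl w F)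
    {k : ℕ} (hk : k < w.length) : x.val k ≠ none := by
  have := hx.1 ⟨k, hk⟩
  simp only [List.get_eq_getElem] at this
  rw [this]
  simp

lemma exists_cyl_inter {x : FullShift A} {w₁ w₂ : List A} {F₁ F₂ : Finset A}
    (h₁ : x ∈ Zcyl w₁ F₁) (h₂ : x ∈ Zcyl w₂ F₂) :
    ∃ w F, x ∈ Zcyl w F ∧ Zcyl w F ⊆ Zcyl w₁ F₁ ∩ Zcyl w₂ F₂ := by
  classical
  -- key sublemma, asymmetric form
  have key : ∀ (w₁ w₂ : List A) (F₁ F₂ : Finset A), x ∈ Zcyl w₁ F₁ → x ∈ Zcyl w₂ F₂ →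
      w₁.length < w₂.length → Zcyl w₂ F₂ ⊆ Zcyl w₁ F₁ := by
    intro w₁ w₂ F₁ F₂ h₁ h₂ hlt y hy
    constructor
    · intro i
      have hi2 : (i : ℕ) < w₂.length := lt_trans i.isLt hlt
      have e1 := hy.1 ⟨i, hi2⟩
      have e2 := h₂.1 ⟨i, hi2⟩
      have e3 := h₁.1 i
      simp only [List.get_eq_getElem] at *
      rw [e1, ← e2, e3]
    · intro a ha hcon
      have e1 := hy.1 ⟨w₁.length, hlt⟩
      have e2 := h₂.1 ⟨w₁.length, hlt⟩
      simp only [List.get_eq_getElem] at e1 e2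
      rw [e1, ← e2] at hcon
      exact h₁.2 a ha hcon
  rcases lt_trichotomy w₁.length w₂.length with hlt | heq | hgt
  · exact ⟨w₂, F₂, h₂, fun y hy => ⟨key w₁ w₂ F₁ F₂ h₁ h₂ hlt hy, hy⟩⟩
  · have hww : w₁ = w₂ := by
      apply List.ext_getElem heq
      intro i hi1 hi2
      have e1 := h₁.1 ⟨i, hi1⟩
      have e2 := h₂.1 ⟨i, hi2⟩
      simp only [List.get_eq_getElem] at e1 e2
      rw [e1] at e2
      exact Option.some_injective _ e2
    subst hww
    refine ⟨w₁, F₁ ∪ F₂, ⟨h₁.1, ?_⟩, ?_⟩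
    · intro a ha
      rcases Finset.mem_union.1 ha with ha | ha
      · exact h₁.2 a ha
      · rw [heq]; exact h₂.2 a ha
    · intro y hy
      constructor
      · exact ⟨hy.1, fun a ha => hy.2 a (Finset.mem_union_left _ ha)⟩
      · refine ⟨fun i => ?_, fun a ha => ?_⟩
        · have := hy.1 (Fin.cast heq.symm i)
          simp only [List.get_eq_getElem] at this ⊢
          simpa using this
        · rw [← heq]; exact hy.2 a (Finset.mem_union_right _ ha)
  · exact ⟨w₁, F₁, h₁, fun y hy => ⟨hy, key w₂ w₁ F₂ F₁ h₂ h₁ hgt hy⟩⟩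

/-- Cylinders containing `x` give a neighborhood basis at `x`. -/
lemma exists_cyl_of_isOpen {U : Set (FullShift A)} (hU : IsOpen U) :
    ∀ x ∈ U, ∃ w F, x ∈ Zcyl w F ∧ Zcyl w F ⊆ U := by
  have hU' : TopologicalSpace.GenerateOpen {S | ∃ (w : List A) (F : Finset A), S = Zcyl w F} U := hU
  clear hU
  induction hU' with
  | basic S hS =>
    intro x hx
    obtain ⟨w, F, rfl⟩ := hS
    exact ⟨w, F, hx, subset_rfl⟩
  | univ =>
    intro x _
    refine ⟨[], ∅, ⟨fun i => absurd i.isLt (by simp), by simp⟩, fun y _ => trivial⟩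
  | inter S T _ _ ihS ihT =>
    intro x hx
    obtain ⟨w₁, F₁, hx1, hs1⟩ := ihS x hx.1
    obtain ⟨w₂, F₂, hx2, hs2⟩ := ihT x hx.2
    obtain ⟨w, F, hxw, hsub⟩ := exists_cyl_inter hx1 hx2
    exact ⟨w, F, hxw, fun y hy => ⟨hs1 (hsub hy).1, hs2 (hsub hy).2⟩⟩
  | sUnion S _ ih =>
    intro x hx
    obtain ⟨T, hT, hxT⟩ := hx
    obtain ⟨w, F, hxw, hsub⟩ := ih T hT x hxT
    exact ⟨w, F, hxw, fun y hy => ⟨T, hT, hsub hy⟩⟩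

lemma exists_cyl_iInter {x : FullShift A} {K : ℕ} (w : Fin K → List A) (F : Fin K → Finset A)
    (h : ∀ i, x ∈ Zcyl (w i) (F i)) :
    ∃ w₀ F₀, x ∈ Zcyl w₀ F₀ ∧ ∀ i, Zcyl w₀ F₀ ⊆ Zcyl (w i) (F i) := by
  induction K with
  | zero =>
    refine ⟨[], ∅, ⟨fun i => absurd i.isLt (by simp), by simp⟩, fun i => i.elim0⟩
  | succ K ih =>
    obtain ⟨w₀, F₀, hx₀, hsub₀⟩ := ih (fun i => w i.castSucc) (fun i => F i.castSucc)
      (fun i => h i.castSucc)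
    obtain ⟨w₁, F₁, hx₁, hsub₁⟩ := exists_cyl_inter hx₀ (h (Fin.last K))
    refine ⟨w₁, F₁, hx₁, fun i => ?_⟩
    refine Fin.lastCases ?_ ?_ i
    · exact fun y hy => (hsub₁ hy).2
    · exact fun j y hy => hsub₀ j ((hsub₁ hy).1)

lemma empty_mem_Zcyl_iff {w : List A} {F : Finset A} :
    (emptySeq : FullShift A) ∈ Zcyl w F ↔ w = [] := by
  constructor
  · intro h
    rcases w with _ | ⟨a, w⟩
    · rfl
    · have := h.1 ⟨0, by simp⟩
      simp [emptySeq] at this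
  · rintro rfl
    exact ⟨fun i => absurd i.isLt (by simp), by simp [emptySeq]⟩

end Cyl
section Compact
variable {A : Type*}

open Filter Topology

/-- The OTW full shift is compact. -/
instance : CompactSpace (FullShift A) := by
  classical
  rw [← isCompact_univ_iff, isCompact_iff_ultrafilter_le_nhds]
  intro 𝒰 _
  -- the event that coordinate k is the letter a
  set E : ℕ → A → Set (FullShift A) := fun k a => {y | y.val k = some a} with hE
  set good : ℕ → Prop := fun n => ∀ k ≤ n, ∃ a : A, E k a ∈ 𝒰 with hgood
  have good_mono : ∀ {n m : ℕ}, m ≤ n → good n → good m := by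
    intro n m hmn h k hk
    exact h k (le_trans hk hmn)
  set x : FullShift A := ⟨fun n => if h : good n then some (Classical.choose (h n le_rfl)) else none,
    by
      intro i hi
      rw [dif_neg]
      intro h
      rw [dif_pos (good_mono (Nat.le_succ i) h)] at hi
      cases hi⟩ with hx
  refine ⟨x, Set.mem_univ x, ?_⟩
  have : (𝓝 x : Filter (FullShift A)) = @nhds _ (TopologicalSpace.generateFrom {S | ∃ (w : List A) (F : Finset A), S = Zcyl w F}) x := rfl
  rw [this, TopologicalSpace.nhds_generateFrom]
  refine le_iInf fun S => le_iInf fun hS => ?_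
  obtain ⟨hxS, w, F, rfl⟩ := hS
  rw [le_principal_iff]
  -- events for the prefix are in 𝒰
  have hval : ∀ n, x.val n = if h : good n then some (Classical.choose (h n le_rfl)) else none := fun n => rfl
  have hev : ∀ n a, x.val n = some a → E n a ∈ 𝒰 := by
    intro n a hna
    rw [hval n] at hna
    by_cases h : good n
    · rw [dif_pos h] at hna
      have hsp := Classical.choose_spec (h n le_rfl)
      rwa [Option.some_injective _ hna] at hsp
    · rw [dif_neg h] at hna
      cases hna
  have hnotev : ∀ n, x.val n = none → (∀ k < n, x.val k ≠ none) → ∀ a, E n a ∉ 𝒰 := by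
    intro n hn hprev a ha
    have hg : good n := by
      intro k hk
      rcases Nat.lt_or_ge k n with hk' | hk'
      · have := hprev k hk'
        rw [hval k] at this
        by_cases h : good k
        · exact ⟨Classical.choose (h k le_rfl), (Classical.choose_spec (h k le_rfl))⟩
        · rw [dif_neg h] at this; exact absurd rfl this
      · have : k = n := le_antisymm hk hk'
        subst this
        exact ⟨a, ha⟩
    rw [hval n, dif_pos hg] at hn
    cases hn
  -- prefix events
  have hpre : ∀ i : Fin w.length, E i (w.get i) ∈ 𝒰 := fun i => hev i _ (hxS.1 i)
  -- the set of sequences avoiding F at position w.length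
  have hT : {y : FullShift A | ∀ a ∈ F, y.val w.length ≠ some a} ∈ 𝒰 := by
    by_contra hmem
    have hcon := (Ultrafilter.compl_mem_iff_notMem).mpr hmem
    have hcompl : {y : FullShift A | ∀ a ∈ F, y.val w.length ≠ some a}ᶜ = ⋃ a ∈ F, E w.length a := by
      ext y
      simp only [Set.mem_compl_iff, Set.mem_setOf_eq, Set.mem_iUnion, hE, not_forall]
      constructor
      · intro h
        push_neg at h
        obtain ⟨a, haF, ha⟩ := h
        exact ⟨a, haF, by simpa using ha⟩
      · rintro ⟨a, haF, ha⟩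
        push_neg
        exact ⟨a, haF, by simpa using ha⟩
    rw [hcompl] at hcon
    obtain ⟨a, haF, haU⟩ := (Ultrafilter.finite_biUnion_mem_iff F.finite_toSet).mp hcon
    rcases Option.eq_none_or_eq_some (x.val w.length) with h0 | hb0
    · exact hnotev w.length h0 (fun k hk => alive_of_mem_Zcyl hxS hk) a haU
    · obtain ⟨b, hb⟩ := hb0
      have hbF : b ≠ a := by
        intro h
        rw [h] at hb
        exact hxS.2 a (Finset.mem_coe.mp haF) hb
      have hEb := hev w.length b hb
      have hdisj : E w.length a ∩ E w.length b = ∅ := by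
        ext y
        simp only [hE, Set.mem_inter_iff, Set.mem_setOf_eq, Set.mem_empty_iff_false, iff_false]
        rintro ⟨h1, h2⟩
        rw [h1] at h2
        exact hbF (Option.some_injective _ h2.symm)
      have hint := Filter.inter_mem haU hEb
      rw [hdisj] at hint
      exact Filter.empty_notMem (𝒰 : Filter (FullShift A)) hint
  -- combine
  have hAll : (⋂ i : Fin w.length, E i (w.get i)) ∩
      {y : FullShift A | ∀ a ∈ F, y.val w.length ≠ some a} ∈ 𝒰 :=
    Filter.inter_mem (Filter.iInter_mem.mpr hpre) hT
  refine Filter.mem_of_superset hAll ?_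
  rintro y ⟨h1, h2⟩
  exact ⟨fun i => Set.mem_iInter.mp h1 i, h2⟩

end Compact
section Backward
variable {A B : Type*}

lemma sbc_val_eq {Λ : Set (FullShift A)} {Φ : FullShift A → FullShift B}
    {C : Option B → Set (FullShift A)} (hσΛ : ∀ x ∈ Λ, shiftMap x ∈ Λ)
    (hsbc : IsSBCWith Λ Φ C) {x : FullShift A} (hx : x ∈ Λ) (n : ℕ) (a : Option B)
    (h : shiftMap^[n] x ∈ C a) : (Φ x).val n = a := by
  obtain ⟨a₀, _, hu⟩ := hsbc.2.1 (shiftMap^[n] x) (iter_shift_mem hσΛ hx n)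
  rw [hu _ (hsbc.2.2.2.2 x hx n), hu _ h]

lemma empty_mem_Cd {Λ : Set (FullShift A)} {Φ : FullShift A → FullShift B}
    {C : Option B → Set (FullShift A)} (hsbc : IsSBCWith Λ Φ C) (hO : emptySeq ∈ Λ)
    {d : B} (hd : ∀ n, (Φ emptySeq).val n = some d) : emptySeq ∈ C (some d) := by
  have := hsbc.2.2.2.2 emptySeq hO 0
  rw [hd 0] at this
  simpa using this

lemma sbc_comm {Λ : Set (FullShift A)} {Φ : FullShift A → FullShift B}
    {C : Option B → Set (FullShift A)} (hσΛ : ∀ x ∈ Λ, shiftMap x ∈ Λ)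
    (hsbc : IsSBCWith Λ Φ C) : ∀ x ∈ Λ, Φ (shiftMap x) = shiftMap (Φ x) := by
  intro x hx
  refine FullShift.ext (funext fun n => ?_)
  have h1 : shiftMap^[n+1] x ∈ C ((Φ x).val (n+1)) := hsbc.2.2.2.2 x hx (n+1)
  rw [Function.iterate_succ_apply] at h1
  exact sbc_val_eq hσΛ hsbc (hσΛ x hx) n _ h1

lemma sbc_continuousOn {Λ : Set (FullShift A)} {Φ : FullShift A → FullShift B}
    {C : Option B → Set (FullShift A)} {d : B}
    (hσΛ : ∀ x ∈ Λ, shiftMap x ∈ Λ) (hO : emptySeq ∈ Λ)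
    (hd : ∀ n, (Φ emptySeq).val n = some d) (hsbc : IsSBCWith Λ Φ C)
    (hcyl : ∀ b : B, IsFinUnionCyl Λ (C (some b)))
    (hF : ∀ M : ℕ, ∃ F : Finset A, (F : Set A) ⊆ letters Λ ∧
      ∀ n < M, ∀ x ∈ Zcyl ([] : List A) F ∩ Λ, shiftMap^[n] x ∈ C (some d)) :
    ContinuousOn Φ Λ := by
  classical
  have hECd : emptySeq ∈ C (some d) := empty_mem_Cd hsbc hO hd
  -- per-position neighborhood lemma
  have hpos : ∀ x ∈ Λ, ∀ n : ℕ, ∃ w F, x ∈ Zcyl w F ∧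
      ∀ y, y ∈ Λ → y ∈ Zcyl w F → shiftMap^[n] y ∈ C ((Φ x).val n) := by
    intro x hx n
    by_cases halive : ∀ k < n, x.val k ≠ none
    · have hmem : shiftMap^[n] x ∈ C ((Φ x).val n) := hsbc.2.2.2.2 x hx n
      rcases hA : (Φ x).val n with _ | b
      · -- class õ : x must be an infinite sequence, use finite definedness of C none
        rw [hA] at hmem
        have hinf : ∀ k, x.val k ≠ none := by
          intro k hk
          have h2 : shiftMap^[(max k n) - n] (shiftMap^[n] x) ∈ C none :=
            iter_shift_mem hsbc.2.2.2.1 hmem _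
          rw [← Function.iterate_add_apply] at h2
          have he : (max k n) - n + n = max k n := Nat.sub_add_cancel (le_max_right k n)
          have h3 : shiftMap^[max k n] x = emptySeq :=
            iter_eq_empty (val_none_mono x (le_max_left k n) hk)
          rw [he, h3] at h2
          obtain ⟨a₀, _, hu⟩ := hsbc.2.1 emptySeq hO
          have e1 := hu none h2
          have e2 := hu (some d) hECd
          rw [← e2] at e1
          cases e1
        obtain ⟨P, Q, hPne, hQne, hCP, hCQ⟩ := hsbc.2.2.1 none
        have hmem' : shiftMap^[n] x ∈ {z ∈ Λ | ∃ c ∈ P, Prefixed z c} := hCP ▸ hmem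
        obtain ⟨-, c, hcP, hpref⟩ := hmem'
        obtain ⟨w, hwlen, hxw, hw⟩ := key_nbhd x (n + c.length) ∅ (fun k _ => hinf k) (by simp)
        refine ⟨w, ∅, hxw, fun y hyΛ hyw => ?_⟩
        rw [hCP]
        refine ⟨iter_shift_mem hσΛ hyΛ n, c, hcP, fun i => ?_⟩
        rw [iter_shift_val, hw y hyw _ (by omega : n + (i : ℕ) < n + c.length),
          ← iter_shift_val]
        exact hpref i
      · -- class b : use the cylinder description of C (some b)
        rw [hA] at hmem
        obtain ⟨N, wf, Ff, hCb⟩ := hcyl b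
        have hmem2 : shiftMap^[n] x ∈ Λ ∩ ⋃ i, Zcyl (wf i) (Ff i) := hCb ▸ hmem
        obtain ⟨j, hj⟩ : ∃ j, shiftMap^[n] x ∈ Zcyl (wf j) (Ff j) := Set.mem_iUnion.mp hmem2.2
        set l := (wf j).length with hl
        have halive2 : ∀ k < n + l, x.val k ≠ none := by
          intro k hk
          rcases Nat.lt_or_ge k n with hk' | hk'
          · exact halive k hk'
          · have h5 := alive_of_mem_Zcyl hj (k := k - n) (by omega)
            rwa [iter_shift_val, Nat.add_sub_cancel' hk'] at h5
        have hFcond : ∀ a ∈ Ff j, x.val (n + l) ≠ some a := by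
          intro a ha
          have h6 := hj.2 a ha
          rwa [iter_shift_val] at h6
        obtain ⟨w, hwlen, hxw, hw⟩ := key_nbhd x (n + l) (Ff j) halive2 hFcond
        refine ⟨w, Ff j, hxw, fun y hyΛ hyw => ?_⟩
        rw [hCb]
        refine ⟨iter_shift_mem hσΛ hyΛ n, Set.mem_iUnion.mpr ⟨j, ⟨fun i => ?_, fun a ha => ?_⟩⟩⟩
        · have hi : (i : ℕ) < l := i.isLt
          rw [iter_shift_val, hw y hyw (n + i) (by omega), ← iter_shift_val]
          exact hj.1 i
        · rw [iter_shift_val, ← hl]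
          have h7 := hyw.2 a ha
          rwa [hwlen] at h7
    · -- x dies before position n: use the F_M condition
      push_neg at halive
      obtain ⟨k, hk, hknone⟩ := halive
      have hex : ∃ j, x.val j = none := ⟨k, hknone⟩
      set L := Nat.find hex with hLdef
      have hL : x.val L = none := Nat.find_spec hex
      have hLlt : L < n := lt_of_le_of_lt (Nat.find_min' hex hknone) hk
      have haliveL : ∀ j < L, x.val j ≠ none := fun j hj => Nat.find_min hex hj
      have hxn : x.val n = none := val_none_mono x (le_of_lt hLlt) hL
      have hΦd : (Φ x).val n = some d := by
        apply sbc_val_eq hσΛ hsbc hx n (some d)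
        rw [iter_eq_empty hxn]
        exact hECd
      obtain ⟨FM, -, hFM⟩ := hF (n + 1)
      obtain ⟨w, hwlen, hxw, hw⟩ := key_nbhd x L FM haliveL (by intro a _; rw [hL]; simp)
      refine ⟨w, FM, hxw, fun y hyΛ hyw => ?_⟩
      rw [hΦd]
      have h1 : shiftMap^[L] y ∈ Zcyl ([] : List A) FM ∩ Λ := by
        refine ⟨⟨fun i => absurd i.isLt (by simp), fun a ha => ?_⟩, iter_shift_mem hσΛ hyΛ L⟩
        have h8 := hyw.2 a ha
        rw [hwlen] at h8
        simpa [iter_shift_val] using h8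
      have h2 := hFM (n - L) (by omega) _ h1
      rw [← Function.iterate_add_apply] at h2
      have h9 : n - L + L = n := by omega
      rwa [h9] at h2
  -- assemble continuity
  intro x hx
  rw [ContinuousWithinAt, tendsto_nhds]
  intro V hV hΦV
  obtain ⟨v, G, hΦv, hvV⟩ := exists_cyl_of_isOpen hV _ hΦV
  set m := v.length with hm
  choose wf Ff hxf hyf using fun i : Fin (m + 1) => hpos x hx i
  obtain ⟨w₀, F₀, hx₀, hsub₀⟩ := exists_cyl_iInter wf Ff hxf
  rw [mem_nhdsWithin]
  refine ⟨Zcyl w₀ F₀, isOpen_Zcyl _ _, hx₀, ?_⟩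
  rintro y ⟨hyw, hyΛ⟩
  apply hvV
  have hvals : ∀ n, n ≤ m → (Φ y).val n = (Φ x).val n := by
    intro n hn
    have h10 := hyf ⟨n, by omega⟩ y hyΛ (hsub₀ ⟨n, by omega⟩ hyw)
    exact sbc_val_eq hσΛ hsbc hyΛ n _ h10
  constructor
  · intro i
    rw [hvals i (le_of_lt i.isLt)]
    exact hΦv.1 i
  · intro a ha
    rw [hvals m le_rfl]
    exact hΦv.2 a ha

end Backward
section Helpers
variable {A B : Type*}

lemma comm_iterate {Λ : Set (FullShift A)} (hσΛ : ∀ x ∈ Λ, shiftMap x ∈ Λ)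
    {Φ : FullShift A → FullShift B} (hcomm : ∀ x ∈ Λ, Φ (shiftMap x) = shiftMap (Φ x)) :
    ∀ x ∈ Λ, ∀ n, Φ (shiftMap^[n] x) = shiftMap^[n] (Φ x) := by
  intro x hx n
  induction n generalizing x with
  | zero => rfl
  | succ n ih =>
    rw [Function.iterate_succ_apply, ih (shiftMap x) (hσΛ x hx),
      hcomm x hx, ← Function.iterate_succ_apply]

lemma prefixed_append_iff {x : FullShift A} {u : List A} {o : Option A} :
    Prefixed x (u.map some ++ [o]) ↔
      (∀ i : Fin u.length, x.val i = some (u.get i)) ∧ x.val u.length = o := by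
  constructor
  · intro h
    refine ⟨fun i => ?_, ?_⟩
    · have hi : (i : ℕ) < (u.map some ++ [o]).length := by simp
      have := h ⟨i, hi⟩
      simp only [List.get_eq_getElem] at this ⊢
      rw [List.getElem_append_left (by simp [i.isLt])] at this
      simpa using this
    · have hi : u.length < (u.map some ++ [o]).length := by simp
      have := h ⟨u.length, hi⟩
      simp only [List.get_eq_getElem] at this
      rw [List.getElem_append_right (by simp)] at this
      simpa using this
  · rintro ⟨h1, h2⟩
    intro i
    have hi : (i : ℕ) < u.length + 1 := by have := i.isLt; simpa using this
    simp only [List.get_eq_getElem]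
    rcases Nat.lt_or_ge (i : ℕ) u.length with hlt | hge
    · rw [List.getElem_append_left (by simpa using hlt)]
      simpa using h1 ⟨i, hlt⟩
    · have : (i : ℕ) = u.length := by omega
      rw [List.getElem_append_right (by simpa using hge)]
      simp only [this]
      simpa [this] using h2
end Helpers
section Helpers2
variable {A : Type*}

lemma mem_Zcyl_append_iff {z : FullShift A} {u : List A} {dd : A} :
    z ∈ Zcyl (u ++ [dd]) ∅ ↔
      (∀ i : Fin u.length, z.val i = some (u.get i)) ∧ z.val u.length = some dd := by
  constructor
  · intro h
    refine ⟨fun i => ?_, ?_⟩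
    · have hi : (i : ℕ) < (u ++ [dd]).length := by simp
      have := h.1 ⟨i, hi⟩
      simp only [List.get_eq_getElem] at this ⊢
      rwa [List.getElem_append_left (by simpa using i.isLt)] at this
    · have hi : u.length < (u ++ [dd]).length := by simp
      have := h.1 ⟨u.length, hi⟩
      simp only [List.get_eq_getElem] at this
      rw [List.getElem_append_right (by simp)] at this
      simpa using this
  · rintro ⟨h1, h2⟩
    refine ⟨fun i => ?_, fun a ha => absurd ha (Finset.notMem_empty a)⟩
    have hi : (i : ℕ) < u.length + 1 := by simpa using i.isLt
    simp only [List.get_eq_getElem]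
    rcases Nat.lt_or_ge (i : ℕ) u.length with hlt | hge
    · rw [List.getElem_append_left (by simpa using hlt)]
      simpa using h1 ⟨i, hlt⟩
    · have he : (i : ℕ) = u.length := by omega
      rw [List.getElem_append_right (by simpa using hge)]
      simp only [he]
      simpa [he] using h2

lemma isOpen_val_some (n : ℕ) (d : A) : IsOpen {z : FullShift A | z.val n = some d} := by
  have hrw : {z : FullShift A | z.val n = some d} =
      ⋃ (v : List A) (_ : v.length = n), Zcyl (v ++ [d]) ∅ := by
    ext z
    simp only [Set.mem_setOf_eq, Set.mem_iUnion]
    constructor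
    · intro hz
      have halive : ∀ k < n, z.val k ≠ none := by
        intro k hk hcon
        rw [val_none_mono z (le_of_lt hk) hcon] at hz
        cases hz
      obtain ⟨w, hwlen, hzw, -⟩ := key_nbhd z n ∅ halive (by simp)
      subst hwlen
      exact ⟨w, rfl, mem_Zcyl_append_iff.mpr ⟨hzw.1, hz⟩⟩
    · rintro ⟨v, hvlen, hzv⟩
      have := (mem_Zcyl_append_iff.mp hzv).2
      rwa [hvlen] at this
  rw [hrw]
  exact isOpen_iUnion fun v => isOpen_iUnion fun _ => isOpen_Zcyl _ _

lemma mem_Zcyl_single_iff {z : FullShift A} {dd : A} :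
    z ∈ Zcyl [dd] ∅ ↔ z.val 0 = some dd := by
  have : ([dd] : List A) = [] ++ [dd] := rfl
  rw [this, mem_Zcyl_append_iff]
  simp

end Helpers2
section Forward
variable {A B : Type*}

theorem forward_dir (Λ : Set (FullShift A)) (Γ : Set (FullShift B))
    (hΛ : IsShiftSpace Λ)
    (Φ : FullShift A → FullShift B) (hmap : Set.MapsTo Φ Λ Γ)
    (d : B) (hO : emptySeq ∈ Λ) (hd : ∀ n, (Φ emptySeq).val n = some d)
    (hfd : emptySeq ∈ Γ → FinitelyDefinedIn Λ (Λ ∩ Φ ⁻¹' {emptySeq}))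
    (hcont : ContinuousOn Φ Λ) (hcomm : ∀ x ∈ Λ, Φ (shiftMap x) = shiftMap (Φ x)) :
    ∃ C : Option B → Set (FullShift A), IsSBCWith Λ Φ C ∧
      (∀ b : B, IsFinUnionCyl Λ (C (some b))) ∧
      {b : B | (C (some b)).Nonempty}.Finite ∧
      (∀ M : ℕ, ∃ F : Finset A, (F : Set A) ⊆ letters Λ ∧
        ∀ n < M, ∀ x ∈ Zcyl ([] : List A) F ∩ Λ, shiftMap^[n] x ∈ C (some d)) := by
  classical
  obtain ⟨hclosed, hσΛ, -, -⟩ := hΛ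
  have hcommit := comm_iterate hσΛ hcomm
  set C : Option B → Set (FullShift A) := fun a => {x | x ∈ Λ ∧ (Φ x).val 0 = a} with hC
  have hsub : ∀ a, C a ⊆ Λ := fun a x hx => hx.1
  have huniq : ∀ x ∈ Λ, ∃! a, x ∈ C a :=
    fun x hx => ⟨(Φ x).val 0, ⟨hx, rfl⟩, fun a ha => ha.2.symm⟩
  have hval : ∀ x ∈ Λ, ∀ n : ℕ, shiftMap^[n] x ∈ C ((Φ x).val n) := by
    intro x hx n
    refine ⟨iter_shift_mem hσΛ hx n, ?_⟩
    rw [hcommit x hx n, iter_shift_val, Nat.add_zero]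
  have hCnone_shift : ∀ x ∈ C none, shiftMap x ∈ C none := by
    rintro x ⟨hxΛ, hx0⟩
    refine ⟨hσΛ x hxΛ, ?_⟩
    rw [hcomm x hxΛ, shiftMap_val]
    exact (Φ x).tail 0 hx0
  have hCnone_eq : C none = Λ ∩ Φ ⁻¹' {emptySeq} := by
    ext z
    constructor
    · rintro ⟨hzΛ, hz0⟩
      refine ⟨hzΛ, ?_⟩
      show Φ z = emptySeq
      exact FullShift.ext (funext fun i => val_none_mono (Φ z) (Nat.zero_le i) hz0)
    · rintro ⟨hzΛ, hz⟩
      refine ⟨hzΛ, ?_⟩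
      rw [show Φ z = emptySeq from hz]
      rfl
  have hEnotCnone : emptySeq ∉ C none := by
    rintro ⟨-, h0⟩
    rw [hd 0] at h0
    cases h0
  -- relative openness of C none
  have hrelnone : ∀ x ∈ C none, ∃ w F, x ∈ Zcyl w F ∧ ∀ y ∈ Λ, y ∈ Zcyl w F → y ∈ C none := by
    intro x hx
    have hEG : emptySeq ∈ Γ := by
      have := hmap hx.1
      rw [show Φ x = emptySeq from (hCnone_eq ▸ hx).2] at this
      exact this
    obtain ⟨P, Q, hPne, hQne, hCP, hCQ⟩ := hfd hEG
    rw [← hCnone_eq] at hCP hCQ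
    have hinf : ∀ k, x.val k ≠ none := by
      intro k hk
      have h2 : shiftMap^[k] x ∈ C none := iter_shift_mem hCnone_shift hx k
      rw [iter_eq_empty hk] at h2
      exact hEnotCnone h2
    have hmem' : x ∈ {z | z ∈ Λ ∧ ∃ c ∈ P, Prefixed z c} := hCP ▸ hx
    obtain ⟨-, c, hcP, hpref⟩ := hmem'
    obtain ⟨w, hwlen, hxw, hw⟩ := key_nbhd x c.length ∅ (fun k _ => hinf k) (by simp)
    refine ⟨w, ∅, hxw, fun y hyΛ hyw => ?_⟩
    rw [hCP]
    refine ⟨hyΛ, c, hcP, fun i => ?_⟩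
    rw [hw y hyw _ (by omega : (i : ℕ) < c.length)]
    exact hpref i
  -- relative openness of C (some b)
  have hrelsome : ∀ b : B, ∀ x ∈ C (some b),
      ∃ w F, x ∈ Zcyl w F ∧ ∀ y ∈ Λ, y ∈ Zcyl w F → y ∈ C (some b) := by
    rintro b x ⟨hxΛ, hx0⟩
    have hΦxV : Φ x ∈ Zcyl [b] (∅ : Finset B) := mem_Zcyl_single_iff.mpr hx0
    have hpre : Φ ⁻¹' (Zcyl [b] (∅ : Finset B)) ∈ nhdsWithin x Λ :=
      (hcont x hxΛ).preimage_mem_nhdsWithin ((isOpen_Zcyl _ _).mem_nhds hΦxV)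
    obtain ⟨U, hUo, hxU, hUsub⟩ := mem_nhdsWithin.mp hpre
    obtain ⟨w, F, hxw, hwU⟩ := exists_cyl_of_isOpen hUo x hxU
    refine ⟨w, F, hxw, fun y hyΛ hyw => ?_⟩
    have : Φ y ∈ Zcyl [b] (∅ : Finset B) := hUsub ⟨hwU hyw, hyΛ⟩
    exact ⟨hyΛ, mem_Zcyl_single_iff.mp this⟩
  have hrel : ∀ a : Option B, ∀ x ∈ C a,
      ∃ w F, x ∈ Zcyl w F ∧ ∀ y ∈ Λ, y ∈ Zcyl w F → y ∈ C a := by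
    intro a
    cases a with
    | none => exact hrelnone
    | some b => exact hrelsome b
  choose wA FA hmem1 hsub1 using hrel
  set U : Option B → Set (FullShift A) :=
    fun a => ⋃ (x : FullShift A) (h : x ∈ C a), Zcyl (wA a x h) (FA a x h) with hU
  have hUopen : ∀ a, IsOpen (U a) :=
    fun a => isOpen_iUnion fun x => isOpen_iUnion fun h => isOpen_Zcyl _ _
  have hCU : ∀ a, C a = Λ ∩ U a := by
    intro a
    apply Set.Subset.antisymm
    · intro x hx
      exact ⟨hsub a hx, Set.mem_iUnion.mpr ⟨x, Set.mem_iUnion.mpr ⟨hx, hmem1 a x hx⟩⟩⟩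
    · rintro y ⟨hyΛ, hyU⟩
      obtain ⟨x, hxm⟩ := Set.mem_iUnion.mp hyU
      obtain ⟨h, hycyl⟩ := Set.mem_iUnion.mp hxm
      exact hsub1 a x h y hyΛ hycyl
  have hcptΛ : IsCompact Λ := hclosed.isCompact
  -- finitely many nonempty classes
  have hcoverΛ : Λ ⊆ ⋃ a : Option B, U a := by
    intro x hx
    have : x ∈ C ((Φ x).val 0) := ⟨hx, rfl⟩
    have := (hCU ((Φ x).val 0)) ▸ this
    exact Set.mem_iUnion.mpr ⟨(Φ x).val 0, this.2⟩
  obtain ⟨t, ht⟩ := hcptΛ.elim_finite_subcover U hUopen hcoverΛ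
  have hfinNE : {b : B | (C (some b)).Nonempty}.Finite := by
    have hsub2 : {b : B | (C (some b)).Nonempty} ⊆ (fun b : B => some b) ⁻¹' ↑t := by
      rintro b ⟨x, hxCb⟩
      have hxΛ : x ∈ Λ := hsub _ hxCb
      obtain ⟨a, hat, hxa⟩ := Set.mem_iUnion₂.mp (ht hxΛ)
      have hxCa : x ∈ C a := (hCU a) ▸ ⟨hxΛ, hxa⟩
      have : a = some b := by
        obtain ⟨a₀, -, hun⟩ := huniq x hxΛ
        rw [hun a hxCa, hun (some b) hxCb]
      rwa [this] at hat
    exact Set.Finite.subset (t.finite_toSet.preimage (Set.injOn_of_injective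
      (Option.some_injective B))) hsub2
  -- C (some b) is closed, hence compact
  have hclosedCb : ∀ b : B, IsClosed (C (some b)) := by
    intro b
    have heq : C (some b) = Λ ∩ (⋃ (a : Option B) (_ : a ≠ some b), U a)ᶜ := by
      apply Set.Subset.antisymm
      · intro x hx
        refine ⟨hsub _ hx, fun hcon => ?_⟩
        obtain ⟨a, ha, hxa⟩ := Set.mem_iUnion₂.mp hcon
        have hxCa : x ∈ C a := (hCU a) ▸ ⟨hsub _ hx, hxa⟩
        obtain ⟨a₀, -, hun⟩ := huniq x (hsub _ hx)
        exact ha ((hun a hxCa).trans (hun (some b) hx).symm)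
      · rintro x ⟨hxΛ, hxc⟩
        have hx0 : x ∈ C ((Φ x).val 0) := ⟨hxΛ, rfl⟩
        by_cases hbb : (Φ x).val 0 = some b
        · exact ⟨hxΛ, hbb⟩
        · exfalso
          apply hxc
          have := (hCU ((Φ x).val 0)) ▸ hx0
          exact Set.mem_iUnion₂.mpr ⟨(Φ x).val 0, hbb, this.2⟩
    rw [heq]
    exact hclosed.inter (isOpen_iUnion fun a => isOpen_iUnion fun _ => hUopen a).isClosed_compl
  -- finite union of cylinders
  have hfinCyl : ∀ b : B, IsFinUnionCyl Λ (C (some b)) := by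
    intro b
    have hcptCb : IsCompact (C (some b)) := (hclosedCb b).isCompact
    have hcover : C (some b) ⊆ ⋃ i : {x // x ∈ C (some b)},
        Zcyl (wA (some b) i.1 i.2) (FA (some b) i.1 i.2) := by
      intro x hx
      exact Set.mem_iUnion.mpr ⟨⟨x, hx⟩, hmem1 _ x hx⟩
    obtain ⟨s, hs⟩ := hcptCb.elim_finite_subcover _ (fun i => isOpen_Zcyl _ _) hcover
    refine ⟨s.card, fun i => wA (some b) ((s.equivFin.symm i).1).1 ((s.equivFin.symm i).1).2,
      fun i => FA (some b) ((s.equivFin.symm i).1).1 ((s.equivFin.symm i).1).2, ?_⟩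
    apply Set.Subset.antisymm
    · intro x hx
      refine ⟨hsub _ hx, ?_⟩
      obtain ⟨i, hit, hxi⟩ := Set.mem_iUnion₂.mp (hs hx)
      refine Set.mem_iUnion.mpr ⟨s.equivFin ⟨i, hit⟩, ?_⟩
      simp only [Equiv.symm_apply_apply]
      exact hxi
    · rintro y ⟨hyΛ, hyU⟩
      obtain ⟨i, hyi⟩ := Set.mem_iUnion.mp hyU
      exact hsub1 (some b) _ _ y hyΛ hyi
  -- finite definedness of all classes
  have hhalf : ∀ a : Option B, ∃ P : Set (List (Option A)),
      (∀ c ∈ P, c ≠ []) ∧ C a = {x | x ∈ Λ ∧ ∃ c ∈ P, Prefixed x c} := by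
    intro a
    cases a with
    | none =>
      by_cases hEG : emptySeq ∈ Γ
      · obtain ⟨P, Q, hPne, hQne, hCP, hCQ⟩ := hfd hEG
        exact ⟨P, hPne, by rw [hCnone_eq]; exact hCP⟩
      · refine ⟨∅, by simp, ?_⟩
        have : C none = ∅ := by
          apply Set.eq_empty_iff_forall_notMem.mpr
          intro x hx
          apply hEG
          have := hmap hx.1
          rwa [show Φ x = emptySeq from (hCnone_eq ▸ hx).2] at this
        rw [this]
        ext x
        simp
    | some b =>
      obtain ⟨N, wb, Fb, hCb⟩ := hfinCyl b
      refine ⟨⋃ i : Fin N, {c | ∃ o : Option A, (∀ a' ∈ Fb i, o ≠ some a') ∧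
        c = (wb i).map some ++ [o]}, ?_, ?_⟩
      · intro c hc
        obtain ⟨i, hi⟩ := Set.mem_iUnion.mp hc
        obtain ⟨o, ho, rfl⟩ := hi
        simp
      · rw [hCb]
        ext x
        simp only [Set.mem_inter_iff, Set.mem_iUnion, Set.mem_setOf_eq]
        constructor
        · rintro ⟨hxΛ, i, hxi⟩
          refine ⟨hxΛ, (wb i).map some ++ [x.val (wb i).length], ?_,
            prefixed_append_iff.mpr ⟨hxi.1, rfl⟩⟩
          exact ⟨i, x.val (wb i).length, fun a' ha' => hxi.2 a' ha', rfl⟩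
        · rintro ⟨hxΛ, c, hcP, hpref⟩
          obtain ⟨i, o, ho, rfl⟩ := hcP
          obtain ⟨h1, h2⟩ := prefixed_append_iff.mp hpref
          refine ⟨hxΛ, i, h1, fun a' ha' => ?_⟩
          rw [h2]
          exact ho a' ha'
  have hFD : ∀ a, FinitelyDefinedIn Λ (C a) := by
    choose Pf hPfne hPfeq using hhalf
    intro a₀
    refine ⟨Pf a₀, ⋃ (a : Option B) (_ : a ≠ a₀), Pf a, hPfne a₀, ?_, hPfeq a₀, ?_⟩
    · intro c hc
      obtain ⟨a, ha⟩ := Set.mem_iUnion.mp hc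
      obtain ⟨hne, hca⟩ := Set.mem_iUnion.mp ha
      exact hPfne a c hca
    · ext x
      simp only [Set.mem_diff, Set.mem_setOf_eq]
      constructor
      · rintro ⟨hxΛ, hxn⟩
        have hx0 : x ∈ C ((Φ x).val 0) := ⟨hxΛ, rfl⟩
        have hne : (Φ x).val 0 ≠ a₀ := fun h => hxn (h ▸ hx0)
        have := (hPfeq ((Φ x).val 0)) ▸ hx0
        obtain ⟨-, c, hcP, hpref⟩ := this
        exact ⟨hxΛ, c, Set.mem_iUnion.mpr ⟨(Φ x).val 0, Set.mem_iUnion.mpr ⟨hne, hcP⟩⟩, hpref⟩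
      · rintro ⟨hxΛ, c, hcQ, hpref⟩
        obtain ⟨a, ha⟩ := Set.mem_iUnion.mp hcQ
        obtain ⟨hne, hca⟩ := Set.mem_iUnion.mp ha
        have hxa : x ∈ C a := (hPfeq a) ▸ ⟨hxΛ, c, hca, hpref⟩
        refine ⟨hxΛ, fun hxa₀ => hne ?_⟩
        obtain ⟨b₀, -, hun⟩ := huniq x hxΛ
        rw [hun a hxa, hun a₀ hxa₀]
  -- the F_M condition
  have hFM : ∀ M : ℕ, ∃ F : Finset A, (F : Set A) ⊆ letters Λ ∧
      ∀ n < M, ∀ x ∈ Zcyl ([] : List A) F ∩ Λ, shiftMap^[n] x ∈ C (some d) := by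
    intro M
    have hstep : ∀ n : ℕ, ∃ Fn : Finset A, ∀ y ∈ Λ, y ∈ Zcyl ([] : List A) Fn →
        (Φ y).val n = some d := by
      intro n
      have hPhiE : Φ emptySeq ∈ {z : FullShift B | z.val n = some d} := hd n
      have hpre : Φ ⁻¹' {z : FullShift B | z.val n = some d} ∈ nhdsWithin emptySeq Λ :=
        (hcont emptySeq hO).preimage_mem_nhdsWithin ((isOpen_val_some n d).mem_nhds hPhiE)
      obtain ⟨U', hUo, hxU, hUsub⟩ := mem_nhdsWithin.mp hpre
      obtain ⟨w, F, hxw, hwU⟩ := exists_cyl_of_isOpen hUo emptySeq hxU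
      have hwnil : w = [] := empty_mem_Zcyl_iff.mp hxw
      subst hwnil
      exact ⟨F, fun y hyΛ hyw => hUsub ⟨hwU hyw, hyΛ⟩⟩
    choose FF hFF using hstep
    refine ⟨((Finset.range M).biUnion FF).filter (· ∈ letters Λ), ?_, ?_⟩
    · intro a ha
      simp only [Finset.coe_filter, Set.mem_setOf_eq] at ha
      exact ha.2
    · rintro n hn y ⟨hyZ, hyΛ⟩
      have hyFn : y ∈ Zcyl ([] : List A) (FF n) := by
        refine ⟨fun i => absurd i.isLt (by simp), fun a ha hcon => ?_⟩
        have haL : a ∈ letters Λ := ⟨y, hyΛ, 0, by simpa using hcon⟩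
        have haF : a ∈ ((Finset.range M).biUnion FF).filter (· ∈ letters Λ) := by
          rw [Finset.mem_filter]
          exact ⟨Finset.mem_biUnion.mpr ⟨n, Finset.mem_range.mpr hn, ha⟩, haL⟩
        exact hyZ.2 a haF hcon
      have := hFF n y hyΛ hyFn
      have hv := hval y hyΛ n
      rwa [this] at hv
  exact ⟨C, ⟨hsub, huniq, hFD, hCnone_shift, hval⟩, hfinCyl, hfinNE, hFM⟩

end Forward
/-- Curtis-Hedlund-Lyndon theorem, second form. Assuming
`Φ(Ø) = (d,d,d,…)` and (when `Ø ∈ Γ`) `Φ⁻¹(Ø)` finitely defined, `Φ` is continuous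
and shift commuting iff it is a sliding block code whose classes `C_a` are finite
unions of generalized cylinders of `Λ`, only finitely many classes are nonempty, and
for each `M` there is a finite `F_M ⊆ L_Λ` with `σ^{n}(Z(Ø,F_M) ∩ Λ) ⊆ C_d` for all
`n < M`. -/
theorem curtis_hedlund_lyndon_two {A B : Type*} [Countable A] [Infinite A] [Countable B] [Infinite B]
    (Λ : Set (FullShift A)) (Γ : Set (FullShift B))
    (hΛ : IsShiftSpace Λ) (hΓ : IsShiftSpace Γ)
    (Φ : FullShift A → FullShift B) (hmap : Set.MapsTo Φ Λ Γ)
    (d : B) (hO : emptySeq ∈ Λ) (hd : ∀ n, (Φ emptySeq).val n = some d)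
    (hfd : emptySeq ∈ Γ → FinitelyDefinedIn Λ (Λ ∩ Φ ⁻¹' {emptySeq})) :
    (ContinuousOn Φ Λ ∧ ∀ x ∈ Λ, Φ (shiftMap x) = shiftMap (Φ x)) ↔
      ∃ C : Option B → Set (FullShift A), IsSBCWith Λ Φ C ∧
        (∀ b : B, IsFinUnionCyl Λ (C (some b))) ∧
        {b : B | (C (some b)).Nonempty}.Finite ∧
        (∀ M : ℕ, ∃ F : Finset A, (F : Set A) ⊆ letters Λ ∧
          ∀ n < M, ∀ x ∈ Zcyl ([] : List A) F ∩ Λ, shiftMap^[n] x ∈ C (some d)) := by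
  constructor
  · rintro ⟨hcont, hcomm⟩
    exact forward_dir Λ Γ hΛ Φ hmap d hO hd hfd hcont hcomm
  · rintro ⟨C, hsbc, hcyl, hfin, hF⟩
    exact ⟨sbc_continuousOn hΛ.2.1 hO hd hsbc hcyl hF, sbc_comm hΛ.2.1 hsbc⟩

end OTW
end

section
/- In Σ_A with A countably infinite, for any letter a ∈ A, the set C = {x ∈ Σ_A : x_2 = a} is a finitely defined set which is open but not closed, and its complement is a finitely defined set which is closed but not open. -/
namespace OTW

variable {A B : Type*}

lemma val_zero_some_of_val_one {A : Type*} {a : A} (x : FullShift A)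
    (h : x.val 1 = some a) : ∃ b, x.val 0 = some b := by
  cases h0 : x.val 0 with
  | none => have := x.tail 0 h0; rw [this] at h; exact absurd h.symm (Option.some_ne_none _)
  | some b => exact ⟨b, rfl⟩

lemma finSeq_pair_val0 {A : Type*} (b a : A) : (finSeq [b, a]).val 0 = some b := rfl

lemma finSeq_pair_val1 {A : Type*} (b a : A) : (finSeq [b, a]).val 1 = some a := rfl

lemma key_generateOpen {A : Type*} [Infinite A] (a : A) :
    ∀ U : Set (FullShift A),
      TopologicalSpace.GenerateOpen {S | ∃ (w : List A) (F : Finset A), S = Zcyl w F} U →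
      emptySeq ∈ U → ∃ G : Finset A, ∀ b ∉ G, finSeq [b, a] ∈ U := by
  classical
  intro U hU
  induction hU with
  | basic S hS =>
    intro hmem
    obtain ⟨w, F, rfl⟩ := hS
    cases w with
    | cons c t =>
      exfalso
      have := hmem.1 ⟨0, by simp⟩
      simp [emptySeq] at this
    | nil =>
      refine ⟨F, fun b hb => ?_⟩
      constructor
      · intro i; exact absurd i.isLt (by simp)
      · intro f hf hEq
        simp only [List.length_nil] at hEq
        rw [finSeq_pair_val0] at hEq
        exact hb (by rw [Option.some_inj] at hEq; rwa [hEq])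
  | univ => intro _; exact ⟨∅, fun _ _ => trivial⟩
  | inter U V hU hV ihU ihV =>
    intro hmem
    obtain ⟨G1, h1⟩ := ihU hmem.1
    obtain ⟨G2, h2⟩ := ihV hmem.2
    refine ⟨G1 ∪ G2, fun b hb => ?_⟩
    simp only [Finset.mem_union, not_or] at hb
    exact ⟨h1 b hb.1, h2 b hb.2⟩
  | sUnion S hS ih =>
    intro hmem
    obtain ⟨T, hT, hmemT⟩ := hmem
    obtain ⟨G, hG⟩ := ih T hT hmemT
    exact ⟨G, fun b hb => ⟨T, hT, hG b hb⟩⟩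

/-- in `Σ_A` with `A` countably infinite, `C = {x : x_2 = a}` is a
finitely defined set which is open but not closed, and `Cᶜ` is a finitely defined
set which is closed but not open. -/
theorem coordinate_set_finitelyDefined_open_not_closed {A : Type*} [Countable A] [Infinite A]
    (a : A) (C : Set (FullShift A)) (hC : C = {x : FullShift A | x.val 1 = some a}) :
    FinitelyDefinedIn Set.univ C ∧ IsOpen C ∧ ¬ IsClosed C ∧
    FinitelyDefinedIn Set.univ Cᶜ ∧ IsClosed Cᶜ ∧ ¬ IsOpen Cᶜ := by
  subst hC
  set C : Set (FullShift A) := {x : FullShift A | x.val 1 = some a} with hCdef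
  -- finitely defined representation
  set P : Set (List (Option A)) := {l | ∃ b : A, l = [some b, some a]} with hP
  set Q : Set (List (Option A)) := {l | ∃ c0 c1 : Option A, c1 ≠ some a ∧ l = [c0, c1]} with hQ
  have hCP : C = {x ∈ (Set.univ : Set (FullShift A)) | ∃ b ∈ P, Prefixed x b} := by
    ext x
    constructor
    · intro hx
      obtain ⟨b, hb⟩ := val_zero_some_of_val_one x hx
      refine ⟨trivial, [some b, some a], ⟨b, rfl⟩, ?_⟩
      intro i
      fin_cases i
      · exact hb
      · exact hx
    · rintro ⟨-, l, ⟨b, rfl⟩, hpre⟩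
      exact hpre ⟨1, by simp⟩
  have hCQ : (Set.univ : Set (FullShift A)) \ C = {x ∈ (Set.univ : Set (FullShift A)) | ∃ b ∈ Q, Prefixed x b} := by
    ext x
    constructor
    · rintro ⟨-, hx⟩
      refine ⟨trivial, [x.val 0, x.val 1], ⟨x.val 0, x.val 1, hx, rfl⟩, ?_⟩
      intro i
      fin_cases i <;> rfl
    · rintro ⟨-, l, ⟨c0, c1, hc1, rfl⟩, hpre⟩
      refine ⟨trivial, ?_⟩
      intro hx
      have := hpre ⟨1, by simp⟩
      simp only at this
      rw [hx] at this
      exact hc1 this.symm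
  have hPne : ∀ b ∈ P, b ≠ [] := by rintro l ⟨b, rfl⟩; simp
  have hQne : ∀ b ∈ Q, b ≠ [] := by rintro l ⟨c0, c1, -, rfl⟩; simp
  have hFD : FinitelyDefinedIn Set.univ C := ⟨P, Q, hPne, hQne, hCP, hCQ⟩
  have hCcompl : (Set.univ : Set (FullShift A)) \ Cᶜ = C := by simp
  have hCcompl' : (Set.univ : Set (FullShift A)) \ C = Cᶜ := by simp [Set.diff_eq]
  have hFDc : FinitelyDefinedIn Set.univ Cᶜ := by
    refine ⟨Q, P, hQne, hPne, ?_, ?_⟩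
    · rw [← hCcompl']; exact hCQ
    · rw [hCcompl]; exact hCP
  -- openness of C
  have hCU : C = ⋃ b : A, Zcyl [b, a] ∅ := by
    ext x
    constructor
    · intro hx
      obtain ⟨b, hb⟩ := val_zero_some_of_val_one x hx
      refine Set.mem_iUnion.mpr ⟨b, ?_, by simp⟩
      intro i
      fin_cases i
      · exact hb
      · exact hx
    · intro hx
      obtain ⟨b, hb⟩ := Set.mem_iUnion.mp hx
      exact hb.1 ⟨1, by simp⟩
  have hOpen : IsOpen C := by
    rw [hCU]
    apply isOpen_iUnion
    intro b
    exact TopologicalSpace.GenerateOpen.basic _ ⟨[b, a], ∅, rfl⟩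
  -- Cᶜ is not open
  have hnotOpen : ¬ IsOpen Cᶜ := by
    intro h
    have h' : TopologicalSpace.GenerateOpen
        {S | ∃ (w : List A) (F : Finset A), S = Zcyl w F} Cᶜ := h
    have hmem : emptySeq ∈ Cᶜ := by
      intro hmem
      exact Option.some_ne_none _ (show (none : Option A) = some a from hmem).symm
    obtain ⟨G, hG⟩ := key_generateOpen a Cᶜ h' hmem
    obtain ⟨b, hb⟩ := G.exists_notMem
    exact hG b hb (finSeq_pair_val1 b a)
  refine ⟨hFD, hOpen, ?_, hFDc, ?_, hnotOpen⟩
  · intro h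
    exact hnotOpen (isOpen_compl_iff.mpr h)
  · rw [← isOpen_compl_iff, compl_compl]
    exact hOpen


end OTW
end
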